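/- The function H(y) = (1/√(exp(2y²) − 1))·∫_0^y exp(u²) du is strictly decreasing on (0, ∞), and H(y) → 1/√2 as y → 0⁺. -/

import Mathlib

open Real intervalIntegral

noncomputable def Ff (y : ℝ) : ℝ := ∫ u in (0:ℝ)..y, Real.exp (u ^ 2)

lemma contf : Continuous fun u : ℝ => Real.exp (u ^ 2) := by continuity

lemma hFderiv (y : ℝ) : HasDerivAt Ff (Real.exp (y ^ 2)) y :=
  (contf.integral_hasStrictDerivAt 0 y).hasDerivAt

lemma F_ge (y : ℝ) (hy : 0 < y) : y ≤ Ff y := by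
  have h : ∫ u in (0:ℝ)..y, (1:ℝ) ≤ Ff y := by
    apply intervalIntegral.integral_mono_on hy.le
    · exact intervalIntegrable_const
    · exact (contf.intervalIntegrable 0 y)
    · intro u _; exact Real.one_le_exp (sq_nonneg u)
  simpa using h

lemma key (y : ℝ) (hy : 0 < y) : Real.sinh (y ^ 2) < y * Ff y := by
  set ψ : ℝ → ℝ := fun y => y * Ff y - Real.sinh (y ^ 2) with hψ
  have hder : ∀ x, HasDerivAt ψ (Ff x + x * Real.exp (x ^ 2) - 2 * x * Real.cosh (x ^ 2)) x := by
    intro x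
    have h1 : HasDerivAt (fun x : ℝ => x * Ff x) (1 * Ff x + x * Real.exp (x ^ 2)) x :=
      (hasDerivAt_id x).mul (hFderiv x)
    have h2 : HasDerivAt (fun x : ℝ => Real.sinh (x ^ 2)) (Real.cosh (x ^ 2) * (2 * x)) x := by
      have := (Real.hasDerivAt_sinh (x ^ 2)).comp x ((hasDerivAt_pow 2 x))
      simpa [Function.comp_def] using this
    have := h1.sub h2
    refine this.congr_deriv ?_
    ring
  have hmono : StrictMonoOn ψ (Set.Ici 0) := by
    apply strictMonoOn_of_deriv_pos (convex_Ici 0)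
    · exact fun x _ => ((hder x).continuousAt).continuousWithinAt
    · intro x hx
      rw [interior_Ici] at hx
      rw [(hder x).deriv]
      have hF : x ≤ Ff x := F_ge x hx
      have hc : Real.cosh (x ^ 2) = (Real.exp (x ^ 2) + Real.exp (-(x ^ 2))) / 2 := Real.cosh_eq _
      have hx' : (0:ℝ) < x := hx
      have he : Real.exp (-(x ^ 2)) < 1 := by
        rw [Real.exp_lt_one_iff]; nlinarith
      nlinarith
  have h0 : ψ 0 = 0 := by simp [hψ, Ff]
  have := hmono (Set.self_mem_Ici) (Set.mem_Ici.mpr hy.le) hy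
  rw [h0] at this
  simp only [hψ] at this
  linarith

lemma apos (y : ℝ) (hy : 0 < y) : 0 < Real.exp (2 * y ^ 2) - 1 := by
  have h : (0:ℝ) < 2 * y ^ 2 := by positivity
  linarith [Real.add_one_le_exp (2 * y ^ 2)]

lemma Hderiv (y : ℝ) (hy : 0 < y) :
    HasDerivAt (fun y => Ff y / Real.sqrt (Real.exp (2 * y ^ 2) - 1))
      ((Real.exp (y ^ 2) * Real.sqrt (Real.exp (2 * y ^ 2) - 1) -
        Ff y * (1 / (2 * Real.sqrt (Real.exp (2 * y ^ 2) - 1)) * (Real.exp (2 * y ^ 2) * (2 * (2 * y))))) /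
        (Real.sqrt (Real.exp (2 * y ^ 2) - 1)) ^ 2) y := by
  have ha := apos y hy
  have hinner : HasDerivAt (fun y : ℝ => Real.exp (2 * y ^ 2) - 1)
      (Real.exp (2 * y ^ 2) * (2 * (2 * y))) y := by
    have h1 : HasDerivAt (fun y : ℝ => 2 * y ^ 2) (2 * (2 * y)) y := by
      simpa using ((hasDerivAt_pow 2 y).const_mul 2)
    exact ((Real.hasDerivAt_exp _).comp y h1).sub_const 1
  have hG : HasDerivAt (fun y : ℝ => Real.sqrt (Real.exp (2 * y ^ 2) - 1))
      (1 / (2 * Real.sqrt (Real.exp (2 * y ^ 2) - 1)) * (Real.exp (2 * y ^ 2) * (2 * (2 * y)))) y :=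
    (Real.hasDerivAt_sqrt ha.ne').comp y hinner
  exact (hFderiv y).div hG (Real.sqrt_ne_zero'.mpr ha)

lemma Hderiv_neg (y : ℝ) (hy : 0 < y) :
    (Real.exp (y ^ 2) * Real.sqrt (Real.exp (2 * y ^ 2) - 1) -
        Ff y * (1 / (2 * Real.sqrt (Real.exp (2 * y ^ 2) - 1)) * (Real.exp (2 * y ^ 2) * (2 * (2 * y))))) /
        (Real.sqrt (Real.exp (2 * y ^ 2) - 1)) ^ 2 < 0 := by
  have ha := apos y hy
  set s := Real.sqrt (Real.exp (2 * y ^ 2) - 1) with hs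
  have hspos : 0 < s := Real.sqrt_pos.mpr ha
  have hssq : s * s = Real.exp (2 * y ^ 2) - 1 := Real.mul_self_sqrt ha.le
  apply div_neg_of_neg_of_pos _ (by positivity)
  rw [sub_neg]
  have hk := key y hy
  rw [Real.sinh_eq] at hk
  have hE : Real.exp (2 * y ^ 2) = Real.exp (y ^ 2) * Real.exp (y ^ 2) := by
    rw [← Real.exp_add]; ring_nf
  have hinv : Real.exp (y ^ 2) * Real.exp (-(y ^ 2)) = 1 := by
    rw [← Real.exp_add]; simp
  have hepos := Real.exp_pos (y ^ 2)
  have hE2pos := Real.exp_pos (2 * y ^ 2)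
  have hEinv : Real.exp (2 * y ^ 2) * Real.exp (-y ^ 2) = Real.exp (y ^ 2) := by
    rw [← Real.exp_add]; ring_nf
  have h3 := mul_lt_mul_of_pos_left hk (by positivity : (0:ℝ) < 2 * Real.exp (2 * y ^ 2))
  have h2 : Real.exp (y ^ 2) * (s * s) < Ff y * (2 * y * Real.exp (2 * y ^ 2)) := by
    rw [hssq]; nlinarith [h3, hEinv]
  calc Real.exp (y ^ 2) * s < Ff y * (2 * y * Real.exp (2 * y ^ 2)) / s := by
        rw [lt_div_iff₀ hspos]; nlinarith
    _ = Ff y * (1 / (2 * s) * (Real.exp (2 * y ^ 2) * (2 * (2 * y)))) := by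
        field_simp

lemma Heq (H : ℝ → ℝ)
    (hH : ∀ y, H y = 1 / Real.sqrt (Real.exp (2 * y ^ 2) - 1) *
      ∫ u in (0:ℝ)..y, Real.exp (u ^ 2)) :
    H = fun y => Ff y / Real.sqrt (Real.exp (2 * y ^ 2) - 1) := by
  funext y; rw [hH y, one_div, inv_mul_eq_div]; rfl

lemma Hanti (H : ℝ → ℝ)
    (hH : ∀ y, H y = 1 / Real.sqrt (Real.exp (2 * y ^ 2) - 1) *
      ∫ u in (0:ℝ)..y, Real.exp (u ^ 2)) :
    StrictAntiOn H (Set.Ioi 0) := by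
  rw [Heq H hH]
  apply strictAntiOn_of_deriv_neg (convex_Ioi 0)
  · intro y hy
    exact ((Hderiv y hy).continuousAt).continuousWithinAt
  · intro y hy
    rw [interior_Ioi] at hy
    rw [(Hderiv y hy).deriv]
    exact Hderiv_neg y hy

open Filter Topology in
lemma L1 : Tendsto (fun y => Ff y / y) (nhdsWithin 0 (Set.Ioi 0)) (nhds 1) := by
  have h := hFderiv 0
  rw [hasDerivAt_iff_tendsto_slope] at h
  norm_num at h
  have h' := h.mono_left (nhdsWithin_mono 0 (fun x hx => by
    simp only [Set.mem_compl_iff, Set.mem_singleton_iff]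
    exact ne_of_gt hx))
  refine h'.congr' ?_
  filter_upwards [self_mem_nhdsWithin] with y hy
  have hy0 : (y:ℝ) ≠ 0 := ne_of_gt hy
  have hF0 : Ff 0 = 0 := by simp [Ff]
  simp [slope_def_field, hF0, div_eq_iff hy0]

open Filter Topology in
lemma L2 : Tendsto (fun y : ℝ => y ^ 2 / (Real.exp (2 * y ^ 2) - 1))
    (nhdsWithin 0 (Set.Ioi 0)) (nhds (1/2)) := by
  have hexp := Real.hasDerivAt_exp 0
  rw [hasDerivAt_iff_tendsto_slope] at hexp
  norm_num at hexp
  have hg : Tendsto (fun y : ℝ => 2 * y ^ 2) (nhdsWithin 0 (Set.Ioi 0))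
      (nhdsWithin 0 {(0:ℝ)}ᶜ) := by
    apply tendsto_nhdsWithin_of_tendsto_nhds_of_eventually_within
    · have : Tendsto (fun y : ℝ => 2 * y ^ 2) (nhds 0) (nhds 0) := by
        have h := (Continuous.tendsto (by continuity : Continuous (fun y : ℝ => 2 * y ^ 2)) (0:ℝ))
        simpa using h
      exact this.mono_left nhdsWithin_le_nhds
    · filter_upwards [self_mem_nhdsWithin] with y hy
      have : (0:ℝ) < y := hy
      simp only [Set.mem_compl_iff, Set.mem_singleton_iff]
      positivity
  have hT : Tendsto (fun y : ℝ => slope Real.exp 0 (2 * y ^ 2))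
      (nhdsWithin 0 (Set.Ioi 0)) (nhds 1) := hexp.comp hg
  have hT2 : Tendsto (fun y : ℝ => (2 * slope Real.exp 0 (2 * y ^ 2))⁻¹)
      (nhdsWithin 0 (Set.Ioi 0)) (nhds ((2 * 1)⁻¹)) :=
    ((hT.const_mul 2).inv₀ (by norm_num))
  norm_num at hT2
  refine hT2.congr' ?_
  filter_upwards [self_mem_nhdsWithin] with y hy
  have hy0 : (0:ℝ) < y := hy
  have ha := apos y hy0
  rw [slope_def_field, Real.exp_zero]
  field_simp
  ring

open Filter Topology in
/-- The function `H(y) = (e^{2y²} - 1)^{-1/2} ∫_0^y e^{u²} du` is strictly decreasing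
on `(0, ∞)` and tends to `1/√2` as `y → 0⁺`. -/
theorem H_strictly_decreasing
    (H : ℝ → ℝ)
    (hH : ∀ y, H y = 1 / Real.sqrt (Real.exp (2 * y ^ 2) - 1) *
      ∫ u in (0:ℝ)..y, Real.exp (u ^ 2)) :
    StrictAntiOn H (Set.Ioi 0) ∧
    Filter.Tendsto H (nhdsWithin 0 (Set.Ioi 0)) (nhds (1 / Real.sqrt 2)) := by
  refine ⟨Hanti H hH, ?_⟩
  have L3 : Tendsto (fun y : ℝ => Real.sqrt (y ^ 2 / (Real.exp (2 * y ^ 2) - 1)))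
      (nhdsWithin 0 (Set.Ioi 0)) (nhds (Real.sqrt (1/2))) :=
    (Real.continuous_sqrt.tendsto _).comp L2
  have hfin := L1.mul L3
  rw [one_mul] at hfin
  have hval : Real.sqrt (1/2) = 1 / Real.sqrt 2 := by
    rw [one_div, one_div, Real.sqrt_inv]
  rw [hval] at hfin
  refine hfin.congr' ?_
  filter_upwards [self_mem_nhdsWithin] with y hy
  have hy0 : (0:ℝ) < y := hy
  have ha := apos y hy0
  have hs : 0 < Real.sqrt (Real.exp (2 * y ^ 2) - 1) := Real.sqrt_pos.mpr ha
  rw [Heq H hH]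
  have : Real.sqrt (y ^ 2 / (Real.exp (2 * y ^ 2) - 1)) =
      y / Real.sqrt (Real.exp (2 * y ^ 2) - 1) := by
    rw [Real.sqrt_div (sq_nonneg y), Real.sqrt_sq hy0.le]
  rw [this]
  field_simp
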